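/- Let N ≥ 1 and n ≥ 2 be integers. Let A be an N×N matrix with entries in ℂ((t)) such that A.coeff m = 0 for all m < −n and such that the polar part A.coeff(−n) is a non-nilpotent complex N×N matrix. Then for every invertible N×N matrix g over ℂ((t)), the gauge transform B = g·A·g⁻¹ − g′·g⁻¹ again has order of singularity at least n; that is, there exists an integer m ≤ −n and indices i, j with (B i j).coeff m ≠ 0. (This is the paper's Lemma 'order of singularity', in the vector-bundle/GL_N case to which the paper reduces slope computations via faithful representations.) -/

import Mathlib

set_option maxHeartbeats 1000000
set_option synthInstance.maxHeartbeats 400000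


open scoped Classical

/-- The formal derivative of a formal Laurent series: `f′.coeff m = (m+1) • f.coeff (m+1)`. -/
noncomputable def lderiv (f : LaurentSeries ℂ) : LaurentSeries ℂ where
  coeff m := ((m + 1 : ℤ) : ℂ) * f.coeff (m + 1)
  isPWO_support' := by
    have h : (Function.support fun m : ℤ => ((m + 1 : ℤ) : ℂ) * f.coeff (m + 1)) ⊆
        (fun m : ℤ => m - 1) '' f.support := by
      intro m hm
      have : f.coeff (m + 1) ≠ 0 := by
        intro h0
        apply hm
        simp [Function.mem_support, h0]
      exact ⟨m + 1, this, by ring⟩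
    exact (f.isPWO_support.image_of_monotone fun a b hab => by omega).mono h

/-- The matrix of `m`-th coefficients of a matrix of Laurent series. -/
noncomputable def mcoeff {N : ℕ} (A : Matrix (Fin N) (Fin N) (LaurentSeries ℂ)) (m : ℤ) :
    Matrix (Fin N) (Fin N) ℂ :=
  Matrix.of fun i j => (A i j).coeff m

/-- Entrywise formal derivative of a matrix of Laurent series. -/
noncomputable def mderiv {N : ℕ} (A : Matrix (Fin N) (Fin N) (LaurentSeries ℂ)) :
    Matrix (Fin N) (Fin N) (LaurentSeries ℂ) :=
  A.map lderiv

@[simp] lemma lderiv_coeff (f : LaurentSeries ℂ) (m : ℤ) :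
    (lderiv f).coeff m = ((m + 1 : ℤ) : ℂ) * f.coeff (m + 1) := rfl

/-- Euler operator: multiply the `m`-th coefficient by `m`. -/
noncomputable def eop (f : LaurentSeries ℂ) : LaurentSeries ℂ where
  coeff m := (m : ℂ) * f.coeff m
  isPWO_support' := f.isPWO_support.mono (by
    intro m hm
    simp only [Function.mem_support] at hm
    intro h0
    exact hm (by rw [show f.coeff m = 0 from h0, mul_zero]))

@[simp] lemma eop_coeff (f : LaurentSeries ℂ) (m : ℤ) : (eop f).coeff m = (m : ℂ) * f.coeff m := rfl

lemma eop_support (f : LaurentSeries ℂ) : (eop f).support ⊆ f.support := by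
  intro m hm
  simp only [HahnSeries.mem_support, eop_coeff] at hm ⊢
  intro h0; exact hm (by rw [h0, mul_zero])

lemma eop_mul (f g : LaurentSeries ℂ) : eop (f * g) = eop f * g + f * eop g := by
  ext m
  have h1 : (eop f * g).coeff m =
      ∑ ij ∈ Finset.antidiagonal f.isPWO_support g.isPWO_support m,
        ((ij.1 : ℂ) * f.coeff ij.1) * g.coeff ij.2 := by
    rw [HahnSeries.coeff_mul_left' f.isPWO_support (eop_support f)]
    simp only [eop_coeff]
  have h2 : (f * eop g).coeff m =
      ∑ ij ∈ Finset.antidiagonal f.isPWO_support g.isPWO_support m,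
        f.coeff ij.1 * ((ij.2 : ℂ) * g.coeff ij.2) := by
    rw [HahnSeries.coeff_mul_right' g.isPWO_support (eop_support g)]
    simp only [eop_coeff]
  show (m : ℂ) * (f * g).coeff m = _
  rw [HahnSeries.coeff_add, h1, h2, HahnSeries.coeff_mul, Finset.mul_sum,
    ← Finset.sum_add_distrib]
  refine Finset.sum_congr rfl fun ij hij => ?_
  rw [Finset.mem_antidiagonal] at hij
  have hm : (m : ℂ) = (ij.1 : ℂ) + (ij.2 : ℂ) := by
    rw [← hij.2.2]; push_cast; ring
  rw [hm]; ring

lemma lderiv_eq (f : LaurentSeries ℂ) :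
    lderiv f = HahnSeries.single (-1 : ℤ) (1 : ℂ) * eop f := by
  ext m
  have h : (HahnSeries.single (-1 : ℤ) (1 : ℂ) * eop f).coeff ((m + 1) + (-1)) =
      (1 : ℂ) * (eop f).coeff (m + 1) := HahnSeries.coeff_single_mul_add
  rw [show (m + 1) + (-1 : ℤ) = m by ring] at h
  rw [h, lderiv_coeff, one_mul, eop_coeff]

lemma lderiv_mul (f g : LaurentSeries ℂ) :
    lderiv (f * g) = lderiv f * g + f * lderiv g := by
  rw [lderiv_eq (f * g), eop_mul, mul_add, lderiv_eq f, lderiv_eq g]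
  ring

lemma lderiv_add (f g : LaurentSeries ℂ) : lderiv (f + g) = lderiv f + lderiv g := by
  ext m
  simp only [lderiv_coeff, HahnSeries.coeff_add]
  ring

lemma lderiv_zero : lderiv 0 = 0 := by
  ext m; simp

lemma lderiv_one : lderiv 1 = 0 := by
  ext m
  simp only [lderiv_coeff, HahnSeries.coeff_zero, HahnSeries.coeff_one]
  by_cases h : m + 1 = 0
  · rw [show ((m + 1 : ℤ) : ℂ) = 0 by exact_mod_cast congrArg (Int.cast : ℤ → ℂ) h, zero_mul]
  · simp [h]

noncomputable def lderivHom : LaurentSeries ℂ →+ LaurentSeries ℂ :=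
  { toFun := lderiv, map_zero' := lderiv_zero, map_add' := lderiv_add }

lemma lderiv_sum {ι : Type*} (s : Finset ι) (f : ι → LaurentSeries ℂ) :
    lderiv (∑ k ∈ s, f k) = ∑ k ∈ s, lderiv (f k) :=
  map_sum lderivHom f s

lemma coeff_sum {ι : Type*} (s : Finset ι) (f : ι → LaurentSeries ℂ) (m : ℤ) :
    (∑ k ∈ s, f k).coeff m = ∑ k ∈ s, (f k).coeff m := by
  classical
  induction s using Finset.induction with
  | empty => simp
  | insert _ _ h ih => rw [Finset.sum_insert h, Finset.sum_insert h, HahnSeries.coeff_add, ih]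

lemma mderiv_apply {N : ℕ} (X : Matrix (Fin N) (Fin N) (LaurentSeries ℂ)) (i j : Fin N) :
    mderiv X i j = lderiv (X i j) := rfl

lemma mderiv_mul {N : ℕ} (X Y : Matrix (Fin N) (Fin N) (LaurentSeries ℂ)) :
    mderiv (X * Y) = mderiv X * Y + X * mderiv Y := by
  apply Matrix.ext
  intro i j
  simp only [mderiv, Matrix.map_apply, Matrix.mul_apply, Matrix.add_apply]
  rw [lderiv_sum, ← Finset.sum_add_distrib]
  exact Finset.sum_congr rfl fun k _ => lderiv_mul _ _

lemma mderiv_one {N : ℕ} : mderiv (1 : Matrix (Fin N) (Fin N) (LaurentSeries ℂ)) = 0 := by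
  apply Matrix.ext
  intro i j
  simp only [mderiv, Matrix.map_apply, Matrix.zero_apply, Matrix.one_apply]
  by_cases h : i = j <;> simp [h, lderiv_one, lderiv_zero]

lemma coeff_mul_zero {f g : LaurentSeries ℂ} {p q m : ℤ}
    (hf : ∀ a < p, f.coeff a = 0) (hg : ∀ b < q, g.coeff b = 0) (hm : m < p + q) :
    (f * g).coeff m = 0 := by
  rw [HahnSeries.coeff_mul]
  apply Finset.sum_eq_zero
  intro ij hij
  rw [Finset.mem_antidiagonal] at hij
  rcases lt_or_ge ij.1 p with h | h
  · rw [hf _ h, zero_mul]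
  · have h2 : ij.2 < q := by have := hij.2.2; omega
    rw [hg _ h2, mul_zero]

lemma coeff_mul_lead {f g : LaurentSeries ℂ} {p q : ℤ}
    (hf : ∀ a < p, f.coeff a = 0) (hg : ∀ b < q, g.coeff b = 0) :
    (f * g).coeff (p + q) = f.coeff p * g.coeff q := by
  have h1 : ∀ ij ∈ Finset.antidiagonal f.isPWO_support g.isPWO_support (p + q),
      ij ≠ (p, q) → f.coeff ij.1 * g.coeff ij.2 = 0 := by
    intro ij hij hne
    rw [Finset.mem_antidiagonal] at hij
    rcases lt_or_ge ij.1 p with h | h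
    · rw [hf _ h, zero_mul]
    · rcases lt_or_ge ij.2 q with h2 | h2
      · rw [hg _ h2, mul_zero]
      · exfalso
        apply hne
        have hs := hij.2.2
        have heq : ij.1 = p ∧ ij.2 = q := by omega
        exact Prod.ext heq.1 heq.2
  have h2 : (p, q) ∉ Finset.antidiagonal f.isPWO_support g.isPWO_support (p + q) →
      f.coeff (p, q).1 * g.coeff (p, q).2 = 0 := by
    intro hnot
    by_cases hfp : f.coeff p = 0
    · rw [show f.coeff (p, q).1 = 0 from hfp, zero_mul]
    by_cases hgq : g.coeff q = 0
    · rw [show g.coeff (p, q).2 = 0 from hgq, mul_zero]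
    exact absurd (Finset.mem_antidiagonal.mpr
      ⟨(HahnSeries.mem_support _ _).mpr hfp, (HahnSeries.mem_support _ _).mpr hgq, rfl⟩) hnot
  rw [HahnSeries.coeff_mul, Finset.sum_eq_single (p, q) h1 h2]

lemma single_one_mul_coeff (s : ℤ) (h : LaurentSeries ℂ) (m : ℤ) :
    (HahnSeries.single s (1 : ℂ) * h).coeff m = h.coeff (m - s) := by
  have h1 : (HahnSeries.single s (1 : ℂ) * h).coeff ((m - s) + s) =
      (1 : ℂ) * h.coeff (m - s) := HahnSeries.coeff_single_mul_add
  rw [show (m - s) + s = m by ring, one_mul] at h1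
  exact h1

lemma ring_key {R : Type*} [Ring R] (x y u v A B : R) (hyx : y * x = 1) (hxy : x * y = 1)
    (hleib : v * x + y * u = 0) (hB : B = x * A * y - u * y) : v + A * y = y * B := by
  have hvx : v * x = -(y * u) := eq_neg_of_add_eq_zero_left hleib
  have hv : v = -(y * u * y) := by
    calc v = v * (x * y) := by rw [hxy, mul_one]
    _ = v * x * y := by rw [mul_assoc]
    _ = -(y * u) * y := by rw [hvx]
    _ = -(y * u * y) := neg_mul _ _
  rw [hB, mul_sub]
  simp only [← mul_assoc]
  rw [hyx, one_mul, hv]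
  abel

lemma ring_tw {R : Type*} [Ring R] (v A y B W Y : R) (key : v + A * y = y * B) :
    v * Y + y * W + A * (y * Y) = y * (W + B * Y) := by
  rw [mul_add]
  have h : y * (B * Y) = v * Y + A * (y * Y) := by
    rw [← mul_assoc, ← key, add_mul, mul_assoc]
  rw [h]
  abel

lemma msmul_left {N : ℕ} (t : LaurentSeries ℂ) (M X : Matrix (Fin N) (Fin N) (LaurentSeries ℂ)) :
    M * (t • X) = t • (M * X) := by
  apply Matrix.ext; intro i j
  simp only [Matrix.smul_apply, Matrix.mul_apply, smul_eq_mul, Finset.mul_sum]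
  exact Finset.sum_congr rfl fun k _ => by ring

/-- Vanishing of all coefficients below `c`. -/
def Pv {N : ℕ} (c : ℤ) (X : Matrix (Fin N) (Fin N) (LaurentSeries ℂ)) : Prop :=
  ∀ m < c, ∀ i j, (X i j).coeff m = 0

lemma Pv.mul {N : ℕ} {b c : ℤ} {X Y : Matrix (Fin N) (Fin N) (LaurentSeries ℂ)}
    (hX : Pv b X) (hY : Pv c Y) : Pv (b + c) (X * Y) := by
  intro m hm i j
  rw [Matrix.mul_apply, coeff_sum]
  apply Finset.sum_eq_zero
  intro k _
  exact coeff_mul_zero (fun a ha => hX a ha i k) (fun b' hb' => hY b' hb' k j) hm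

lemma mcoeff_mul_lead {N : ℕ} {b c : ℤ} {X Y : Matrix (Fin N) (Fin N) (LaurentSeries ℂ)}
    (hX : Pv b X) (hY : Pv c Y) : mcoeff (X * Y) (b + c) = mcoeff X b * mcoeff Y c := by
  ext i j
  show ((X * Y) i j).coeff (b + c) = _
  rw [Matrix.mul_apply, coeff_sum, Matrix.mul_apply]
  exact Finset.sum_congr rfl fun k _ =>
    coeff_mul_lead (fun a ha => hX a ha i k) (fun b' hb' => hY b' hb' k j)

lemma exists_Pv {N : ℕ} (X : Matrix (Fin N) (Fin N) (LaurentSeries ℂ)) : ∃ c, Pv c X := by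
  have h : ∀ p : Fin N × Fin N, ∃ c : ℤ, ∀ m < c, (X p.1 p.2).coeff m = 0 := by
    intro p
    rcases Set.eq_empty_or_nonempty (X p.1 p.2).support with h | h
    · refine ⟨0, fun m _ => ?_⟩
      by_contra h0
      exact absurd ((HahnSeries.mem_support _ _).mpr h0) (by rw [h]; exact Set.notMem_empty m)
    · refine ⟨(X p.1 p.2).isWF_support.min h, fun m hm => ?_⟩
      by_contra h0
      exact absurd hm (not_lt.mpr
        (Set.IsWF.min_le _ h ((HahnSeries.mem_support _ _).mpr h0)))
  choose c hc using h
  obtain ⟨M, hM⟩ := Finite.exists_le fun p : Fin N × Fin N => -(c p)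
  refine ⟨-M, fun m hm i j => hc (i, j) m ?_⟩
  have := hM (i, j)
  omega

/-- **Lemma (order of singularity).** If `∂ₜ + A` has order of singularity `n ≥ 2` and
non-nilpotent polar part `A.coeff (-n)`, then every gauge transform
`B = g A g⁻¹ - g′ g⁻¹` by an invertible loop-group element `g` again has order of
singularity at least `n`. -/
theorem order_of_singularity_preserved
    (N : ℕ) (hN : 1 ≤ N) (n : ℤ) (hn : 2 ≤ n)
    (A : Matrix (Fin N) (Fin N) (LaurentSeries ℂ))
    (hA : ∀ m : ℤ, m < -n → mcoeff A m = 0)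
    (hnonnilp : ¬ IsNilpotent (mcoeff A (-n)))
    (g : Matrix (Fin N) (Fin N) (LaurentSeries ℂ)) (hg : IsUnit g)
    (B : Matrix (Fin N) (Fin N) (LaurentSeries ℂ))
    (hB : B = g * A * g⁻¹ - (mderiv g) * g⁻¹) :
    ∃ m : ℤ, m ≤ -n ∧ ∃ i j : Fin N, (B i j).coeff m ≠ 0 := by
  by_contra hcon
  push_neg at hcon
  have hBv : Pv (-(n - 1)) B := fun m hm i j => hcon m (by omega) i j
  have hAv : Pv (-n) A := by
    intro m hm i j
    have h := hA m hm
    calc (A i j).coeff m = mcoeff A m i j := rfl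
    _ = (0 : Matrix (Fin N) (Fin N) ℂ) i j := by rw [h]
    _ = 0 := rfl
  have hdet : IsUnit g.det := (Matrix.isUnit_iff_isUnit_det g).mp hg
  have hgi : g⁻¹ * g = 1 := Matrix.nonsing_inv_mul g hdet
  have hig : g * g⁻¹ = 1 := Matrix.mul_nonsing_inv g hdet
  have h0 : mderiv g⁻¹ * g + g⁻¹ * mderiv g = 0 := by
    have h := mderiv_mul g⁻¹ g
    rw [hgi, mderiv_one] at h
    exact h.symm
  have key : mderiv g⁻¹ + A * g⁻¹ = g⁻¹ * B :=
    ring_key g g⁻¹ (mderiv g) (mderiv g⁻¹) A B hgi hig h0 hB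
  set τ : LaurentSeries ℂ := HahnSeries.single (n - 1) (1 : ℂ) with hτ
  set DA : Matrix (Fin N) (Fin N) (LaurentSeries ℂ) → Matrix (Fin N) (Fin N) (LaurentSeries ℂ) :=
    fun X => τ • (mderiv X + A * X) with hDA
  set DB : Matrix (Fin N) (Fin N) (LaurentSeries ℂ) → Matrix (Fin N) (Fin N) (LaurentSeries ℂ) :=
    fun X => τ • (mderiv X + B * X) with hDB
  have hDcoeff : ∀ (C X : Matrix (Fin N) (Fin N) (LaurentSeries ℂ)) (i j : Fin N) (m : ℤ),
      ((τ • (mderiv X + C * X)) i j).coeff m =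
        ((m - (n - 1) + 1 : ℤ) : ℂ) * (X i j).coeff (m - (n - 1) + 1) +
          ((C * X) i j).coeff (m - (n - 1)) := by
    intro C X i j m
    rw [Matrix.smul_apply, smul_eq_mul, hτ, single_one_mul_coeff,
      Matrix.add_apply, HahnSeries.coeff_add, mderiv_apply, lderiv_coeff]
  have hDBpres : ∀ (c : ℤ) (X : Matrix (Fin N) (Fin N) (LaurentSeries ℂ)),
      Pv c X → Pv c (DB X) := by
    intro c X hX m hm i j
    simp only [hDB]
    rw [hDcoeff B X i j m]
    rw [hX _ (by omega) i j, mul_zero, zero_add]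
    rw [Matrix.mul_apply, coeff_sum]
    apply Finset.sum_eq_zero
    intro k _
    exact coeff_mul_zero (fun a ha => hBv a ha i k) (fun b hb => hX b hb k j) (by omega)
  have hTW : ∀ Y, DA (g⁻¹ * Y) = g⁻¹ * DB Y := by
    intro Y
    show τ • (mderiv (g⁻¹ * Y) + A * (g⁻¹ * Y)) = g⁻¹ * (τ • (mderiv Y + B * Y))
    rw [msmul_left]
    congr 1
    rw [mderiv_mul]
    exact ring_tw (mderiv g⁻¹) A g⁻¹ B (mderiv Y) Y key
  have hiter : ∀ k : ℕ, DA^[k] 1 = g⁻¹ * DB^[k] g := by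
    intro k
    induction k with
    | zero => simpa using hgi.symm
    | succ k ih => rw [Function.iterate_succ_apply', Function.iterate_succ_apply', ih, hTW]
  set P := mcoeff A (-n) with hP
  have hlead : ∀ k : ℕ, Pv (-(k : ℤ)) (DA^[k] 1) ∧ mcoeff (DA^[k] 1) (-(k : ℤ)) = P ^ k := by
    intro k
    induction k with
    | zero =>
      constructor
      · intro m hm i j
        simp only [Function.iterate_zero_apply]
        rw [Matrix.one_apply]
        by_cases h : i = j
        · simp only [h, if_true]
          rw [HahnSeries.coeff_one, if_neg (by omega : ¬ m = 0)]
        · simp [h]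
      · ext i j
        simp only [Function.iterate_zero_apply, pow_zero]
        show ((1 : Matrix (Fin N) (Fin N) (LaurentSeries ℂ)) i j).coeff 0 =
          (1 : Matrix (Fin N) (Fin N) ℂ) i j
        rw [Matrix.one_apply, Matrix.one_apply]
        by_cases h : i = j <;> simp [h]
    | succ k ih =>
      obtain ⟨ihP, ihM⟩ := ih
      have hAX : Pv (-n + -(k : ℤ)) (A * DA^[k] 1) := Pv.mul hAv ihP
      constructor
      · intro m hm i j
        rw [Function.iterate_succ_apply']
        simp only [hDA]
        rw [hDcoeff A (DA^[k] 1) i j m]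
        rw [ihP _ (by push_cast at hm ⊢; omega) i j, mul_zero, zero_add]
        exact hAX _ (by push_cast at hm ⊢; omega) i j
      · ext i j
        rw [Function.iterate_succ_apply']
        show ((DA (DA^[k] 1)) i j).coeff (-((k : ℤ) + 1)) = (P ^ (k + 1)) i j
        simp only [hDA]
        rw [hDcoeff A (DA^[k] 1) i j _]
        rw [ihP _ (by omega) i j, mul_zero, zero_add]
        rw [show -((k : ℤ) + 1) - (n - 1) = -n + -(k : ℤ) by ring]
        have hml := mcoeff_mul_lead hAv ihP
        rw [ihM] at hml
        have he : ((A * DA^[k] 1) i j).coeff (-n + -(k : ℤ)) = (P * P ^ k) i j := by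
          calc ((A * DA^[k] 1) i j).coeff (-n + -(k : ℤ))
              = mcoeff (A * DA^[k] 1) (-n + -(k : ℤ)) i j := rfl
          _ = (P * P ^ k) i j := by rw [hml]
        rw [he, pow_succ']
  obtain ⟨cg, hcg⟩ := exists_Pv g
  obtain ⟨ci, hci⟩ := exists_Pv g⁻¹
  have hDBk : ∀ k : ℕ, Pv cg (DB^[k] g) := by
    intro k
    induction k with
    | zero => simpa using hcg
    | succ k ih =>
      rw [Function.iterate_succ_apply']
      exact hDBpres _ _ ih
  have hall : ∀ k : ℕ, Pv (ci + cg) (DA^[k] 1) := by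
    intro k
    rw [hiter]
    exact Pv.mul hci (hDBk k)
  set k : ℕ := (1 - (ci + cg)).toNat + 1 with hk
  have hk2 : -(k : ℤ) < ci + cg := by
    have : (k : ℤ) = (1 - (ci + cg)).toNat + 1 := by exact_mod_cast rfl
    omega
  have hzero : P ^ k = 0 := by
    ext i j
    rw [← (hlead k).2]
    show ((DA^[k] 1) i j).coeff (-(k : ℤ)) = (0 : Matrix (Fin N) (Fin N) ℂ) i j
    rw [hall k _ hk2 i j, Matrix.zero_apply]
  exact hnonnilp ⟨k, hzero⟩
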